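/- For every sequence of pairs of Lebesgue-measurable subsets (A_n, B_n) of (0,1), there exists a subsequence (again denoted (A_n,B_n)) such that the limits f(x) = lim_n (1/n)·#{k ≤ n : x ∈ A_k}, g(y) = lim_n (1/n)·#{k ≤ n : y ∈ B_k}, and h(x,y) = lim_n (1/n)·#{k ≤ n : x ∈ A_k and y ∈ B_k} exist for almost all x, y ∈ (0,1), and h(x,y) = f(x)·g(y) for almost all (x,y). -/

import Mathlib

open MeasureTheory Set Filter Topology
open scoped ENNReal RealInnerProductSpace

set_option synthInstance.maxHeartbeats 1000000
set_option maxHeartbeats 1000000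
set_option linter.unreachableTactic false
set_option linter.unusedTactic false

noncomputable section

lemma exists_weak_subseq {H : Type*} [NormedAddCommGroup H] [InnerProductSpace ℝ H]
    [CompleteSpace H] [TopologicalSpace.SeparableSpace H]
    (a : ℕ → H) (C : ℝ) (hC : ∀ n, ‖a n‖ ≤ C) :
    ∃ φ : ℕ → ℕ, StrictMono φ ∧ ∃ v : H,
      ∀ u : H, Tendsto (fun n => ⟪a (φ n), u⟫) atTop (𝓝 ⟪v, u⟫) := by
  have hC0 : 0 ≤ C := le_trans (norm_nonneg _) (hC 0)
  haveI : Nonempty H := ⟨0⟩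
  set w : ℕ → H := TopologicalSpace.denseSeq H with hwdef
  have hw : DenseRange w := TopologicalSpace.denseRange_denseSeq H
  haveI : ∀ i : ℕ, CompactSpace (Icc (-(C * ‖w i‖)) (C * ‖w i‖)) :=
    fun i => isCompact_iff_compactSpace.mp isCompact_Icc
  have hmem : ∀ n i, ⟪a n, w i⟫ ∈ Icc (-(C * ‖w i‖)) (C * ‖w i‖) := by
    intro n i
    have h2 : |⟪a n, w i⟫| ≤ C * ‖w i‖ :=
      (abs_real_inner_le_norm (a n) (w i)).trans
        (mul_le_mul_of_nonneg_right (hC n) (norm_nonneg _))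
    exact mem_Icc.mpr (abs_le.mp h2)
  let F : ℕ → (Π i : ℕ, Icc (-(C * ‖w i‖)) (C * ‖w i‖)) := fun n i => ⟨_, hmem n i⟩
  obtain ⟨L, φ, hφ, hconv⟩ := CompactSpace.tendsto_subseq F
  refine ⟨φ, hφ, ?_⟩
  have hcoord : ∀ i, Tendsto (fun n => ⟪a (φ n), w i⟫) atTop (𝓝 (L i : ℝ)) := by
    intro i
    have h1 : Tendsto (fun n => (F (φ n)) i) atTop (𝓝 (L i)) :=
      ((continuous_apply i).tendsto L).comp hconv
    exact (continuous_subtype_val.tendsto (L i)).comp h1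
  have hcauchy : ∀ u : H, CauchySeq (fun n => ⟪a (φ n), u⟫) := by
    intro u
    rw [Metric.cauchySeq_iff]
    intro ε hε
    have hδ : (0:ℝ) < ε / (2 * (2 * C + 1)) := by positivity
    obtain ⟨i, hi⟩ := hw.exists_dist_lt u hδ
    have hci : CauchySeq (fun n => ⟪a (φ n), w i⟫) := (hcoord i).cauchySeq
    rw [Metric.cauchySeq_iff] at hci
    obtain ⟨N, hN⟩ := hci (ε / 2) (by positivity)
    refine ⟨N, fun n hn m hm => ?_⟩
    have key : ∀ k, |⟪a (φ k), u⟫ - ⟪a (φ k), w i⟫| ≤ C * (ε / (2 * (2 * C + 1))) := by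
      intro k
      have : ⟪a (φ k), u⟫ - ⟪a (φ k), w i⟫ = ⟪a (φ k), u - w i⟫ := by
        rw [inner_sub_right]
      rw [this]
      refine (abs_real_inner_le_norm _ _).trans ?_
      have hd : ‖u - w i‖ ≤ ε / (2 * (2 * C + 1)) := by
        rw [← dist_eq_norm]; exact hi.le
      exact mul_le_mul (hC _) hd (norm_nonneg _) hC0
    have h1 := key n
    have h2 := key m
    have h3 : dist ⟪a (φ n), w i⟫ ⟪a (φ m), w i⟫ < ε / 2 := hN n hn m hm
    rw [Real.dist_eq] at h3 ⊢
    have hCle : C * (ε / (2 * (2 * C + 1))) ≤ ε / 4 := by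
      rw [mul_div_assoc', div_le_div_iff₀ (by positivity) (by norm_num : (0:ℝ) < 4)]
      nlinarith
    have step : |⟪a (φ n), u⟫ - ⟪a (φ m), u⟫|
        ≤ |⟪a (φ n), u⟫ - ⟪a (φ n), w i⟫| + |⟪a (φ n), w i⟫ - ⟪a (φ m), w i⟫|
          + |⟪a (φ m), w i⟫ - ⟪a (φ m), u⟫| := by
      calc |⟪a (φ n), u⟫ - ⟪a (φ m), u⟫|
          ≤ |⟪a (φ n), u⟫ - ⟪a (φ m), w i⟫| + |⟪a (φ m), w i⟫ - ⟪a (φ m), u⟫| :=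
            abs_sub_le _ _ _
        _ ≤ (|⟪a (φ n), u⟫ - ⟪a (φ n), w i⟫| + |⟪a (φ n), w i⟫ - ⟪a (φ m), w i⟫|)
            + |⟪a (φ m), w i⟫ - ⟪a (φ m), u⟫| := by
            have := abs_sub_le ⟪a (φ n), u⟫ ⟪a (φ n), w i⟫ ⟪a (φ m), w i⟫
            linarith
    have h2' : |⟪a (φ m), w i⟫ - ⟪a (φ m), u⟫| ≤ C * (ε / (2 * (2 * C + 1))) := by
      rw [abs_sub_comm]; exact h2
    have e1 := h1.trans hCle
    have e2 := h2'.trans hCle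
    linarith
  set ℓ : H → ℝ := fun u => limUnder atTop (fun n => ⟪a (φ n), u⟫) with hℓdef
  have hℓ : ∀ u, Tendsto (fun n => ⟪a (φ n), u⟫) atTop (𝓝 (ℓ u)) :=
    fun u => (hcauchy u).tendsto_limUnder
  have hadd : ∀ u₁ u₂, ℓ (u₁ + u₂) = ℓ u₁ + ℓ u₂ := by
    intro u₁ u₂
    refine tendsto_nhds_unique ?_ ((hℓ u₁).add (hℓ u₂))
    simpa only [inner_add_right] using hℓ (u₁ + u₂)
  have hsmul : ∀ (c : ℝ) u, ℓ (c • u) = c * ℓ u := by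
    intro c u
    refine tendsto_nhds_unique ?_ ((hℓ u).const_mul c)
    simpa only [real_inner_smul_right] using hℓ (c • u)
  have hbound : ∀ u, |ℓ u| ≤ C * ‖u‖ := by
    intro u
    refine le_of_tendsto (hℓ u).abs (Eventually.of_forall fun n => ?_)
    exact (abs_real_inner_le_norm _ _).trans
      (mul_le_mul_of_nonneg_right (hC _) (norm_nonneg _))
  let Llin : H →ₗ[ℝ] ℝ :=
    { toFun := ℓ, map_add' := hadd, map_smul' := hsmul }
  let Lclm : H →L[ℝ] ℝ := Llin.mkContinuous C (fun u => by
    show ‖ℓ u‖ ≤ C * ‖u‖; simpa [Real.norm_eq_abs] using hbound u)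
  refine ⟨(InnerProductSpace.toDual ℝ H).symm Lclm, fun u => ?_⟩
  have hv : ⟪(InnerProductSpace.toDual ℝ H).symm Lclm, u⟫ = Lclm u :=
    InnerProductSpace.toDual_symm_apply
  rw [hv]
  exact hℓ u

lemma gapfill (x : ℕ → ℝ) (M : ℝ) (hM : ∀ k, |x k| ≤ M)
    (h : Tendsto (fun m : ℕ => (∑ k ∈ Finset.range (m^2), x k) / ((m:ℝ)^2)) atTop (𝓝 0)) :
    Tendsto (fun N : ℕ => (∑ k ∈ Finset.range N, x k) / (N:ℝ)) atTop (𝓝 0) := by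
  have hM0 : 0 ≤ M := (abs_nonneg _).trans (hM 0)
  set S : ℕ → ℝ := fun N => ∑ k ∈ Finset.range N, x k with hSdef
  have hsqrt : Tendsto Nat.sqrt atTop atTop := by
    refine tendsto_atTop_atTop.mpr fun b => ⟨b * b, fun N hN => Nat.le_sqrt.mpr hN⟩
  set B : ℕ → ℝ := fun N =>
    |S ((Nat.sqrt N)^2) / ((Nat.sqrt N : ℝ)^2)| + (2*(Nat.sqrt N : ℝ)+1)*M/((Nat.sqrt N:ℝ)^2)
    with hBdef
  have hB : Tendsto B atTop (𝓝 0) := by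
    have t1 : Tendsto (fun m : ℕ => |S (m^2) / ((m:ℝ)^2)|) atTop (𝓝 0) := by
      simpa using h.abs
    have t2 : Tendsto (fun m : ℕ => (2*(m:ℝ)+1)*M/((m:ℝ)^2)) atTop (𝓝 0) := by
      apply squeeze_zero' (g := fun m : ℕ => 3*M/(m:ℝ))
      · exact Eventually.of_forall fun m => div_nonneg (by positivity) (by positivity)
      · filter_upwards [eventually_ge_atTop 1] with m hm
        have hm1 : (1:ℝ) ≤ (m:ℝ) := by exact_mod_cast hm
        have hmpos : (0:ℝ) < m := by linarith
        have e1 : (2*(m:ℝ)+1)*M/((m:ℝ)^2) ≤ (3*(m:ℝ))*M/((m:ℝ)^2) := by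
          apply div_le_div_of_nonneg_right ?_ (by positivity)
          · nlinarith
        refine e1.trans (le_of_eq ?_)
        field_simp
      · exact tendsto_const_div_atTop_nhds_zero_nat (3*M)
    have := (t1.comp hsqrt).add (t2.comp hsqrt)
    simpa using this
  have hbound : ∀ᶠ N : ℕ in atTop, |S N / (N:ℝ)| ≤ B N := by
    filter_upwards [eventually_ge_atTop 1] with N hN
    set m := Nat.sqrt N with hmdef
    have hm1 : 1 ≤ m := by
      rw [hmdef]; exact Nat.one_le_iff_ne_zero.mpr (by
        intro h0
        have := Nat.sqrt_eq_zero.mp h0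
        omega)
    have hmN : m^2 ≤ N := by exact Nat.sqrt_le' N
    have hNm : N < (m+1)^2 := by exact Nat.lt_succ_sqrt' N
    have hsplit : S N = S (m^2) + ∑ k ∈ Finset.Ico (m^2) N, x k := by
      rw [hSdef]
      simp only [Finset.range_eq_Ico]
      exact (Finset.sum_Ico_consecutive _ (Nat.zero_le _) hmN).symm
    have htail : |∑ k ∈ Finset.Ico (m^2) N, x k| ≤ ((N - m^2 : ℕ) : ℝ) * M := by
      refine (Finset.abs_sum_le_sum_abs _ _).trans ?_
      have := Finset.sum_le_card_nsmul (Finset.Ico (m^2) N) (fun k => |x k|) M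
        (fun k _ => hM k)
      rw [Nat.card_Ico] at this
      simpa [nsmul_eq_mul] using this
    have hcard : ((N - m^2 : ℕ) : ℝ) ≤ 2*(m:ℝ)+1 := by
      have hNm' : N < m^2 + 2*m + 1 := by
        have : (m+1)^2 = m^2 + 2*m + 1 := by ring
        omega
      have : N - m^2 ≤ 2*m+1 := by omega
      calc ((N - m^2 : ℕ) : ℝ) ≤ ((2*m+1 : ℕ) : ℝ) := by exact_mod_cast this
        _ = 2*(m:ℝ)+1 := by push_cast; ring
    have hm2pos : (0:ℝ) < (m:ℝ)^2 := by
      have : (1:ℝ) ≤ (m:ℝ) := by exact_mod_cast hm1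
      positivity
    have hNpos : (0:ℝ) < (N:ℝ) := by exact_mod_cast hN
    have hm2N : (m:ℝ)^2 ≤ (N:ℝ) := by exact_mod_cast hmN
    have key : |S N| ≤ |S (m^2)| + (2*(m:ℝ)+1)*M := by
      rw [hsplit]
      refine (abs_add_le _ _).trans ?_
      gcongr
      exact htail.trans (by nlinarith)
    rw [abs_div, abs_of_pos hNpos]
    rw [hBdef]
    simp only
    rw [abs_div, abs_of_pos hm2pos]
    have step1 : |S N| / (N:ℝ) ≤ (|S (m^2)| + (2*(m:ℝ)+1)*M) / (N:ℝ) := by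
      gcongr
    refine step1.trans ?_
    rw [add_div]
    gcongr <;> first | exact abs_nonneg _ | positivity
  have habs : Tendsto (fun N : ℕ => |S N / (N:ℝ)|) atTop (𝓝 0) := by
    apply squeeze_zero' (Eventually.of_forall fun N => abs_nonneg _) hbound hB
  have hneg : Tendsto (fun N : ℕ => -|S N / (N:ℝ)|) atTop (𝓝 0) := by
    simpa using habs.neg
  exact tendsto_of_tendsto_of_tendsto_of_le_of_le hneg habs
    (fun N => neg_abs_le _) (fun N => le_abs_self _)

lemma cesaro_ae {α : Type*} [MeasurableSpace α] (μ : Measure α) [IsFiniteMeasure μ]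
    (r : ℕ → α → ℝ) (M C : ℝ) (hM0 : 0 ≤ M) (hC0 : 0 ≤ C)
    (hmeas : ∀ k, Measurable (r k))
    (hb : ∀ k x, |r k x| ≤ M)
    (horth : ∀ k j, j < k → |∫ x, r k x * r j x ∂μ| ≤ C * (1/2:ℝ)^k) :
    ∀ᵐ x ∂μ, Tendsto (fun N : ℕ => (∑ k ∈ Finset.range N, r k x) / (N:ℝ)) atTop (𝓝 0) := by
  have hint : ∀ (f : α → ℝ) (K : ℝ), Measurable f → (∀ x, |f x| ≤ K) → Integrable f μ := by
    intro f K hf hK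
    exact (memLp_of_bounded (Eventually.of_forall fun x =>
      mem_Icc.mpr (abs_le.mp (hK x))) hf.aestronglyMeasurable 1).integrable le_rfl
  set S : α → ℕ → ℝ := fun x N => ∑ k ∈ Finset.range N, r k x with hSdef
  have hSmeas : ∀ N, Measurable (fun x => S x N) :=
    fun N => Finset.measurable_sum _ fun k _ => hmeas k
  have hSb : ∀ N x, |S x N| ≤ N * M := by
    intro N x
    refine (Finset.abs_sum_le_sum_abs _ _).trans ?_
    calc ∑ k ∈ Finset.range N, |r k x| ≤ ∑ k ∈ Finset.range N, M :=
          Finset.sum_le_sum fun k _ => hb k x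
      _ = N * M := by simp [mul_comm]
  set V : ℝ := (μ Set.univ).toReal with hVdef
  have hV0 : 0 ≤ V := ENNReal.toReal_nonneg
  set K : ℝ := M^2 * V + 2*C with hKdef
  have hK0 : 0 ≤ K := by positivity
  have hintS2 : ∀ N, Integrable (fun x => (S x N)^2) μ := by
    intro N
    refine hint _ ((N*M)^2) ((hSmeas N).pow_const 2) (fun x => ?_)
    rw [abs_of_nonneg (sq_nonneg _), ← sq_abs]
    exact pow_le_pow_left₀ (abs_nonneg _) (hSb N x) 2
  have hS2 : ∀ N, ∫ x, (S x N)^2 ∂μ ≤ K * N := by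
    intro N
    induction N with
    | zero => simp [hSdef]
    | succ N ih =>
      have hintSr : Integrable (fun x => 2 * (S x N * r N x) + (r N x)^2) μ := by
        refine Integrable.add ?_ ?_
        · refine (hint _ (N*M*M) ?_ ?_).const_mul 2
          · exact (hSmeas N).mul (hmeas N)
          · intro x
            rw [abs_mul]
            exact mul_le_mul (hSb N x) (hb N x) (abs_nonneg _)
              (by positivity)
        · refine hint _ (M^2) ((hmeas N).pow_const 2) (fun x => ?_)
          rw [abs_of_nonneg (sq_nonneg _), ← sq_abs]
          exact pow_le_pow_left₀ (abs_nonneg _) (hb N x) 2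
      have hexp : ∫ x, (S x (N+1))^2 ∂μ
          = ∫ x, (S x N)^2 ∂μ + ∫ x, 2 * (S x N * r N x) + (r N x)^2 ∂μ := by
        rw [← integral_add (hintS2 N) hintSr]
        refine integral_congr_ae (Eventually.of_forall fun x => ?_)
        simp only [hSdef, Finset.sum_range_succ]
        ring
      have hcross : ∫ x, S x N * r N x ∂μ = ∑ j ∈ Finset.range N, ∫ x, r j x * r N x ∂μ := by
        rw [← integral_finset_sum]
        · refine integral_congr_ae (Eventually.of_forall fun x => ?_)
          simp only [hSdef]
          rw [Finset.sum_mul]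
        · intro j _
          refine hint _ (M*M) ((hmeas j).mul (hmeas N)) (fun x => ?_)
          rw [abs_mul]
          exact mul_le_mul (hb j x) (hb N x) (abs_nonneg _) hM0
      have hcrossb : |∫ x, S x N * r N x ∂μ| ≤ C := by
        rw [hcross]
        refine (Finset.abs_sum_le_sum_abs _ _).trans ?_
        have hterm : ∀ j ∈ Finset.range N, |∫ x, r j x * r N x ∂μ| ≤ C * (1/2:ℝ)^N := by
          intro j hj
          have : (fun x => r j x * r N x) = fun x => r N x * r j x := by
            funext x; ring
          rw [this]
          exact horth N j (Finset.mem_range.mp hj)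
        refine (Finset.sum_le_sum hterm).trans ?_
        rw [Finset.sum_const, Finset.card_range, nsmul_eq_mul]
        have h2N : (N:ℝ) ≤ 2^N := by exact_mod_cast (Nat.lt_two_pow_self (n := N)).le
        calc (N:ℝ) * (C * (1/2:ℝ)^N) = C * ((N:ℝ) * (1/2:ℝ)^N) := by ring
          _ ≤ C * 1 := by
              refine mul_le_mul_of_nonneg_left ?_ hC0
              rw [one_div, inv_pow, mul_inv_le_iff₀ (by positivity), one_mul]
              exact h2N
          _ = C := mul_one C
      have hr2 : ∫ x, (r N x)^2 ∂μ ≤ M^2 * V := by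
        have : ∫ x, (r N x)^2 ∂μ ≤ ∫ _x, M^2 ∂μ := by
          refine integral_mono ?_ (integrable_const _) (fun x => ?_)
          · refine hint _ (M^2) ((hmeas N).pow_const 2) (fun x => ?_)
            rw [abs_of_nonneg (sq_nonneg _), ← sq_abs]
            exact pow_le_pow_left₀ (abs_nonneg _) (hb N x) 2
          · rw [← sq_abs]
            exact pow_le_pow_left₀ (abs_nonneg _) (hb N x) 2
        refine this.trans ?_
        rw [integral_const, smul_eq_mul, hVdef]
        ring_nf
        exact (mul_comm _ _).le
      have hintSr1 : Integrable (fun x => S x N * r N x) μ := by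
        refine hint _ (N*M*M) ((hSmeas N).mul (hmeas N)) (fun x => ?_)
        rw [abs_mul]
        exact mul_le_mul (hSb N x) (hb N x) (abs_nonneg _) (by positivity)
      have hintr2 : Integrable (fun x => (r N x)^2) μ := by
        refine hint _ (M^2) ((hmeas N).pow_const 2) (fun x => ?_)
        rw [abs_of_nonneg (sq_nonneg _), ← sq_abs]
        exact pow_le_pow_left₀ (abs_nonneg _) (hb N x) 2
      have hsplit2 : ∫ x, 2 * (S x N * r N x) + (r N x)^2 ∂μ
          = 2 * ∫ x, S x N * r N x ∂μ + ∫ x, (r N x)^2 ∂μ := by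
        rw [integral_add (hintSr1.const_mul 2) hintr2, integral_const_mul]
      have : ∫ x, (S x (N+1))^2 ∂μ ≤ K * N + (2 * C + M^2 * V) := by
        rw [hexp, hsplit2]
        have h1 : 2 * ∫ x, S x N * r N x ∂μ ≤ 2 * C := by
          have := (abs_le.mp hcrossb).2
          linarith
        linarith [ih, hr2]
      refine this.trans ?_
      push_cast
      rw [hKdef]
      ring_nf
      linarith
  -- from second moments along squares to a.e. convergence
  set e : ℕ → α → ℝ≥0∞ := fun m x => ENNReal.ofReal ((S x (m^2) / ((m:ℝ)^2))^2) with hedef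
  have hemeas : ∀ m, Measurable (e m) := by
    intro m
    exact ENNReal.measurable_ofReal.comp (((hSmeas (m^2)).div_const _).pow_const 2)
  have hIsq : ∀ m, Integrable (fun x => (S x (m^2) / ((m:ℝ)^2))^2) μ := by
    intro m
    refine hint _ ((((m:ℝ)^2*M) / ((m:ℝ)^2))^2) ((((hSmeas (m^2)).div_const _)).pow_const 2)
      (fun x => ?_)
    rw [abs_of_nonneg (sq_nonneg _), ← sq_abs, abs_div]
    refine pow_le_pow_left₀ (div_nonneg (abs_nonneg _) (abs_nonneg _)) ?_ 2
    rw [abs_of_nonneg (sq_nonneg (m:ℝ)), div_eq_mul_inv, div_eq_mul_inv]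
    refine mul_le_mul_of_nonneg_right ?_ (by positivity)
    refine (hSb (m^2) x).trans_eq ?_
    push_cast
    ring
  have hlin : ∀ m, ∫⁻ x, e m x ∂μ = ENNReal.ofReal (∫ x, (S x (m^2) / ((m:ℝ)^2))^2 ∂μ) := by
    intro m
    exact (ofReal_integral_eq_lintegral_ofReal (hIsq m)
      (Eventually.of_forall fun x => sq_nonneg _)).symm
  have hI2 : ∀ m, ∫ x, (S x (m^2) / ((m:ℝ)^2))^2 ∂μ ≤ K / (m:ℝ)^2 := by
    intro m
    have hdiv : (fun x => (S x (m^2) / ((m:ℝ)^2))^2) = fun x => (S x (m^2))^2 / ((m:ℝ)^2)^2 := by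
      funext x; rw [div_pow]
    rw [hdiv]
    simp only [div_eq_mul_inv]
    rw [integral_mul_const]
    have h1 : ∫ x, (S x (m^2))^2 ∂μ ≤ K * (m:ℝ)^2 := by
      have := hS2 (m^2)
      refine this.trans_eq ?_
      push_cast
      ring
    have h2 : (∫ x, (S x (m^2))^2 ∂μ) * (((m:ℝ)^2)^2)⁻¹ ≤ (K * (m:ℝ)^2) * (((m:ℝ)^2)^2)⁻¹ :=
      mul_le_mul_of_nonneg_right h1 (by positivity)
    refine h2.trans_eq ?_
    rcases eq_or_ne (m:ℝ) 0 with h0 | h0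
    · simp [h0]
    · field_simp
  have hsumK : Summable (fun m : ℕ => K / (m:ℝ)^2) := by
    have := (Real.summable_one_div_nat_pow.mpr (by norm_num : 1 < 2)).mul_left K
    refine this.congr (fun m => ?_)
    rw [mul_one_div]
  have htsum : ∑' m, ∫⁻ x, e m x ∂μ ≠ ⊤ := by
    have hle : ∑' m, ∫⁻ x, e m x ∂μ ≤ ∑' m : ℕ, ENNReal.ofReal (K / (m:ℝ)^2) := by
      refine ENNReal.tsum_le_tsum (fun m => ?_)
      rw [hlin m]
      exact ENNReal.ofReal_le_ofReal (hI2 m)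
    have heq : ∑' m : ℕ, ENNReal.ofReal (K / (m:ℝ)^2)
        = ENNReal.ofReal (∑' m : ℕ, K / (m:ℝ)^2) := by
      rw [ENNReal.ofReal_tsum_of_nonneg (fun m => by positivity) hsumK]
    exact ne_top_of_le_ne_top (by rw [heq]; exact ENNReal.ofReal_ne_top) hle
  have hfin : ∀ᵐ x ∂μ, ∑' m, e m x ≠ ⊤ := by
    have hmeas' : Measurable (fun x => ∑' m, e m x) := Measurable.ennreal_tsum hemeas
    have : ∫⁻ x, ∑' m, e m x ∂μ ≠ ⊤ := by
      rw [lintegral_tsum (fun m => (hemeas m).aemeasurable)]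
      exact htsum
    exact (ae_lt_top hmeas' this).mono (fun x hx => hx.ne)
  filter_upwards [hfin] with x hx
  have he0 : Tendsto (fun m => e m x) atTop (𝓝 0) :=
    ENNReal.tendsto_atTop_zero_of_tsum_ne_top hx
  have hsq0 : Tendsto (fun m : ℕ => (S x (m^2) / ((m:ℝ)^2))^2) atTop (𝓝 0) := by
    have := (ENNReal.tendsto_toReal (by simp : (0:ℝ≥0∞) ≠ ⊤)).comp he0
    simp only [Function.comp_def, hedef, ENNReal.toReal_ofReal (sq_nonneg _),
      ENNReal.toReal_zero] at this
    exact this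
  have habs : Tendsto (fun m : ℕ => |S x (m^2) / ((m:ℝ)^2)|) atTop (𝓝 0) := by
    have := (Real.continuous_sqrt.tendsto 0).comp hsq0
    simp only [Function.comp_def, Real.sqrt_sq_eq_abs, Real.sqrt_zero] at this
    exact this
  have hsq : Tendsto (fun m : ℕ => S x (m^2) / ((m:ℝ)^2)) atTop (𝓝 0) := by
    have hneg : Tendsto (fun m : ℕ => -|S x (m^2) / ((m:ℝ)^2)|) atTop (𝓝 0) := by
      simpa using habs.neg
    exact tendsto_of_tendsto_of_tendsto_of_le_of_le hneg habs
      (fun m => neg_abs_le _) (fun m => le_abs_self _)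
  exact gapfill (fun k => r k x) M (fun k => hb k x) hsq

lemma exists_weak_rep {α : Type*} [MeasurableSpace α] [MeasurableSpace.CountablyGenerated α]
    (μ : Measure α) [IsProbabilityMeasure μ] (a : ℕ → Set α) (ham : ∀ n, MeasurableSet (a n)) :
    ∃ φ : ℕ → ℕ, StrictMono φ ∧ ∃ f : α → ℝ, Measurable f ∧ (∀ x, f x ∈ Icc (0:ℝ) 1) ∧
      ∀ u : α → ℝ, Measurable u → (∀ x, |u x| ≤ 2) →
        Tendsto (fun n => ∫ x, (a (φ n)).indicator (fun _ => (1:ℝ)) x * u x ∂μ)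
          atTop (𝓝 (∫ x, f x * u x ∂μ)) := by
  have hmem2 : ∀ (u : α → ℝ) (c : ℝ), Measurable u → (∀ x, |u x| ≤ c) → MemLp u 2 μ := by
    intro u c hu hc
    exact memLp_of_bounded (Eventually.of_forall fun x => mem_Icc.mpr (abs_le.mp (hc x)))
      hu.aestronglyMeasurable 2
  set ind : ℕ → α → ℝ := fun n => (a n).indicator (fun _ => (1:ℝ)) with hinddef
  have hindmeas : ∀ n, Measurable (ind n) := fun n => measurable_const.indicator (ham n)
  have hindb : ∀ n x, |ind n x| ≤ 1 := by
    intro n x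
    rw [hinddef]
    by_cases h : x ∈ a n <;> simp [Set.indicator_apply, h]
  have hindnn : ∀ n x, 0 ≤ ind n x := by
    intro n x
    by_cases h : x ∈ a n <;> simp [hinddef, Set.indicator_apply, h]
  have hindle : ∀ n x, ind n x ≤ 1 := fun n x => (le_abs_self _).trans (hindb n x)
  have hind2 : ∀ n, MemLp (ind n) 2 μ := fun n => hmem2 _ 1 (hindmeas n) (hindb n)
  set aL : ℕ → Lp ℝ 2 μ := fun n => (hind2 n).toLp (ind n) with haLdef
  have hnorm : ∀ n, ‖aL n‖ ≤ 1 := by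
    intro n
    show ‖(hind2 n).toLp (ind n)‖ ≤ 1
    rw [Lp.norm_toLp (ind n) (hind2 n)]
    have h1 : eLpNorm (ind n) 2 μ ≤ μ Set.univ ^ (2:ℝ≥0∞).toReal⁻¹ * ENNReal.ofReal 1 :=
      eLpNorm_le_of_ae_bound (Eventually.of_forall fun x => by
        rw [Real.norm_eq_abs]; exact hindb n x)
    have h2 : μ Set.univ ^ (2:ℝ≥0∞).toReal⁻¹ * ENNReal.ofReal 1 = 1 := by
      simp [measure_univ]
    rw [h2] at h1
    calc (eLpNorm (ind n) 2 μ).toReal ≤ (1 : ℝ≥0∞).toReal :=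
          ENNReal.toReal_mono (by simp) h1
      _ = 1 := by simp
  haveI : Fact ((2:ℝ≥0∞) ≠ ∞) := ⟨by norm_num⟩
  haveI : TopologicalSpace.SeparableSpace (Lp ℝ 2 μ) :=
    TopologicalSpace.SecondCountableTopology.to_separableSpace
  obtain ⟨φ, hφ, v, hv⟩ := exists_weak_subseq aL 1 hnorm
  -- inner products as integrals
  have hinner : ∀ (p q : Lp ℝ 2 μ), ⟪p, q⟫ = ∫ x, p x * q x ∂μ := by
    intro p q
    rw [L2.inner_def]
    congr 1
    funext x; exact Real.inner_apply _ _
  have hcoe : ∀ n, (fun x => (aL n : α → ℝ) x) =ᵐ[μ] ind n :=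
    fun n => (hind2 n).coeFn_toLp
  have hinner' : ∀ (n : ℕ) (u : α → ℝ) (hu : MemLp u 2 μ),
      ⟪aL n, hu.toLp u⟫ = ∫ x, ind n x * u x ∂μ := by
    intro n u hu
    rw [hinner]
    refine integral_congr_ae ?_
    filter_upwards [hcoe n, MemLp.coeFn_toLp hu] with x h1 h2
    rw [h1, h2]
  set v' : α → ℝ := fun x => (v : α → ℝ) x with hv'def
  have hv'meas : Measurable v' := (Lp.stronglyMeasurable v).measurable
  have hv'int : Integrable v' μ := (Lp.memLp v).integrable (by norm_num)
  have hvinner : ∀ (u : α → ℝ) (hu : MemLp u 2 μ),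
      ⟪v, hu.toLp u⟫ = ∫ x, v' x * u x ∂μ := by
    intro u hu
    rw [hinner]
    refine integral_congr_ae ?_
    filter_upwards [MemLp.coeFn_toLp hu] with x h2
    rw [h2]
  -- set integrals of v'
  have hsetint : ∀ E : Set α, MeasurableSet E →
      0 ≤ ∫ x in E, v' x ∂μ ∧ ∫ x in E, v' x ∂μ ≤ (μ E).toReal := by
    intro E hE
    have huE : MemLp (E.indicator (fun _ => (1:ℝ))) 2 μ :=
      hmem2 _ 1 (measurable_const.indicator hE) (fun x => by
        by_cases h : x ∈ E <;> simp [Set.indicator_apply, h])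
    have hkey : ∀ w : α → ℝ, (fun x => w x * E.indicator (fun _ => (1:ℝ)) x)
        = E.indicator w := by
      intro w
      funext x
      by_cases h : x ∈ E <;> simp [Set.indicator_apply, h]
    have htend : Tendsto (fun n => ∫ x, ind (φ n) x * E.indicator (fun _ => (1:ℝ)) x ∂μ)
        atTop (𝓝 (∫ x in E, v' x ∂μ)) := by
      have := hv (huE.toLp _)
      rw [hvinner _ huE] at this
      have heq : ∀ n, ⟪aL (φ n), huE.toLp _⟫ = ∫ x, ind (φ n) x * E.indicator (fun _ => (1:ℝ)) x ∂μ :=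
        fun n => hinner' (φ n) _ huE
      have h3 : ∫ x, v' x * E.indicator (fun _ => (1:ℝ)) x ∂μ = ∫ x in E, v' x ∂μ := by
        rw [hkey v', integral_indicator hE]
      rw [← h3]
      exact Tendsto.congr (fun n => heq n) this
    constructor
    · refine ge_of_tendsto htend (Eventually.of_forall fun n => ?_)
      refine integral_nonneg fun x => ?_
      refine mul_nonneg (hindnn _ x) ?_
      by_cases h : x ∈ E <;> simp [Set.indicator_apply, h]
    · refine le_of_tendsto htend (Eventually.of_forall fun n => ?_)
      have hle : ∀ x, ind (φ n) x * E.indicator (fun _ => (1:ℝ)) x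
          ≤ E.indicator (fun _ => (1:ℝ)) x := by
        intro x
        by_cases h : x ∈ E <;>
          simp [Set.indicator_apply, h, hindle (φ n) x, hindnn (φ n) x]
      have : ∫ x, ind (φ n) x * E.indicator (fun _ => (1:ℝ)) x ∂μ
          ≤ ∫ x, E.indicator (fun _ => (1:ℝ)) x ∂μ := by
        refine integral_mono ?_ ?_ hle
        · exact (hmem2 _ 1 ((hindmeas _).mul (measurable_const.indicator hE))
            (fun x => by
              rw [Pi.mul_apply, abs_mul]
              refine (mul_le_mul (hindb _ x) ?_ (abs_nonneg _) zero_le_one).trans_eq (one_mul 1)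
              by_cases h : x ∈ E <;> simp [Set.indicator_apply, h])).integrable (by norm_num)
        · exact (huE).integrable (by norm_num)
      refine this.trans ?_
      rw [integral_indicator_const (1:ℝ) hE]
      simp
      exact le_rfl
  -- a.e. bounds on v'
  have haenn : ∀ᵐ x ∂μ, 0 ≤ v' x := by
    have hnull : ∀ n : ℕ, μ {x | v' x ≤ -(1/(n+1))} = 0 := by
      intro n
      set E := {x | v' x ≤ -(1/(n+1):ℝ)} with hEdef
      have hE : MeasurableSet E := hv'meas measurableSet_Iic
      obtain ⟨h1, _⟩ := hsetint E hE
      have h2 : ∫ x in E, v' x ∂μ ≤ -(1/(n+1)) * (μ E).toReal := by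
        have := setIntegral_mono_on (hv'int.integrableOn) (integrable_const _).integrableOn hE
          (fun x hx => hx)
        rw [setIntegral_const] at this
        calc ∫ x in E, v' x ∂μ ≤ (μ E).toReal • (-(1/(n+1):ℝ)) := this
          _ = -(1/(n+1)) * (μ E).toReal := by rw [smul_eq_mul]; ring
      have h3 : (0:ℝ) ≤ -(1/(n+1)) * (μ E).toReal := le_trans h1 h2
      have hp : (0:ℝ) < 1/((n:ℝ)+1) := by positivity
      have h4 : (μ E).toReal ≤ 0 := by nlinarith [ENNReal.toReal_nonneg (a := μ E)]
      have h5 : (μ E).toReal = 0 := le_antisymm h4 ENNReal.toReal_nonneg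
      exact (ENNReal.toReal_eq_zero_iff _).mp h5 |>.resolve_right (measure_ne_top μ E)
    have hsub : {x | v' x < 0} ⊆ ⋃ n : ℕ, {x | v' x ≤ -(1/(n+1))} := by
      intro x hx
      obtain ⟨n, hn⟩ := exists_nat_one_div_lt (show (0:ℝ) < -v' x by simpa using hx)
      exact mem_iUnion.mpr ⟨n, by simp only [mem_setOf_eq]; linarith⟩
    have : μ {x | v' x < 0} = 0 :=
      measure_mono_null hsub (measure_iUnion_null hnull)
    filter_upwards [measure_eq_zero_iff_ae_notMem.mp this] with x hx
    simpa using hx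
  have haele : ∀ᵐ x ∂μ, v' x ≤ 1 := by
    have hnull : ∀ n : ℕ, μ {x | 1 + 1/(n+1) ≤ v' x} = 0 := by
      intro n
      set E := {x | 1 + 1/(n+1:ℝ) ≤ v' x} with hEdef
      have hE : MeasurableSet E := hv'meas measurableSet_Ici
      obtain ⟨_, h1⟩ := hsetint E hE
      have h2 : (1 + 1/(n+1)) * (μ E).toReal ≤ ∫ x in E, v' x ∂μ := by
        have := setIntegral_mono_on (integrable_const _).integrableOn
          (hv'int.integrableOn) hE (fun x hx => hx)
        rw [setIntegral_const] at this
        calc (1 + 1/(n+1:ℝ)) * (μ E).toReal = (μ E).toReal • (1 + 1/(n+1:ℝ)) := by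
              rw [smul_eq_mul]; ring
          _ ≤ ∫ x in E, v' x ∂μ := this
      have hp : (0:ℝ) < 1/((n:ℝ)+1) := by positivity
      have h4 : (μ E).toReal ≤ 0 := by nlinarith [ENNReal.toReal_nonneg (a := μ E)]
      have h5 : (μ E).toReal = 0 := le_antisymm h4 ENNReal.toReal_nonneg
      exact (ENNReal.toReal_eq_zero_iff _).mp h5 |>.resolve_right (measure_ne_top μ E)
    have hsub : {x | 1 < v' x} ⊆ ⋃ n : ℕ, {x | 1 + 1/(n+1) ≤ v' x} := by
      intro x hx
      obtain ⟨n, hn⟩ := exists_nat_one_div_lt (show (0:ℝ) < v' x - 1 by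
        simp only [mem_setOf_eq] at hx; linarith)
      exact mem_iUnion.mpr ⟨n, by simp only [mem_setOf_eq]; linarith⟩
    have : μ {x | 1 < v' x} = 0 :=
      measure_mono_null hsub (measure_iUnion_null hnull)
    filter_upwards [measure_eq_zero_iff_ae_notMem.mp this] with x hx
    simpa using hx
  set f : α → ℝ := fun x => max 0 (min 1 (v' x)) with hfdef
  have hfmeas : Measurable f := Measurable.max measurable_const (Measurable.min measurable_const hv'meas)
  have hfIcc : ∀ x, f x ∈ Icc (0:ℝ) 1 := by
    intro x
    constructor
    · exact le_max_left _ _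
    · exact max_le zero_le_one (min_le_left _ _)
  have hfae : f =ᵐ[μ] v' := by
    filter_upwards [haenn, haele] with x h0 h1
    rw [hfdef]
    simp only
    rw [min_eq_right h1, max_eq_right h0]
  refine ⟨φ, hφ, f, hfmeas, hfIcc, ?_⟩
  intro u hu hub
  have hu2 : MemLp u 2 μ := hmem2 u 2 hu hub
  have := hv (hu2.toLp u)
  rw [hvinner u hu2] at this
  have heqn : ∀ n, ⟪aL (φ n), hu2.toLp u⟫ = ∫ x, ind (φ n) x * u x ∂μ :=
    fun n => hinner' (φ n) u hu2
  have hfv : ∫ x, v' x * u x ∂μ = ∫ x, f x * u x ∂μ := by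
    refine integral_congr_ae ?_
    filter_upwards [hfae] with x hx
    rw [hx]
  rw [hfv] at this
  exact Tendsto.congr (fun n => heqn n) this

theorem stmt2 (A B : ℕ → Set ℝ)
    (hAm : ∀ n, MeasurableSet (A n)) (hBm : ∀ n, MeasurableSet (B n))
    (hAsub : ∀ n, A n ⊆ Ioo (0:ℝ) 1) (hBsub : ∀ n, B n ⊆ Ioo (0:ℝ) 1) :
    ∃ φ : ℕ → ℕ, StrictMono φ ∧
    ∃ f g : ℝ → ℝ, ∃ h : ℝ × ℝ → ℝ,
      (∀ᵐ x ∂(volume.restrict (Ioo (0:ℝ) 1)),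
        Tendsto (fun n =>
            (∑ k ∈ Finset.range n, (A (φ k)).indicator (fun _ => (1:ℝ)) x) / n)
          atTop (nhds (f x))) ∧
      (∀ᵐ y ∂(volume.restrict (Ioo (0:ℝ) 1)),
        Tendsto (fun n =>
            (∑ k ∈ Finset.range n, (B (φ k)).indicator (fun _ => (1:ℝ)) y) / n)
          atTop (nhds (g y))) ∧
      (∀ᵐ p ∂((volume.restrict (Ioo (0:ℝ) 1)).prod
          (volume.restrict (Ioo (0:ℝ) 1))),
        Tendsto (fun n =>
            (∑ k ∈ Finset.range n,
              ((A (φ k)) ×ˢ (B (φ k))).indicator (fun _ => (1:ℝ)) p) / n)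
          atTop (nhds (h p))) ∧
      (∀ᵐ p ∂((volume.restrict (Ioo (0:ℝ) 1)).prod
          (volume.restrict (Ioo (0:ℝ) 1))),
        h p = f p.1 * g p.2) := by
  set μ : Measure ℝ := volume.restrict (Ioo (0:ℝ) 1) with hμdef
  haveI : IsProbabilityMeasure μ := ⟨by
    rw [hμdef, Measure.restrict_apply_univ, Real.volume_Ioo]
    norm_num⟩
  obtain ⟨φ₁, hφ₁, f, hfmeas, hfIcc, WA⟩ := exists_weak_rep μ A hAm
  obtain ⟨φ₂, hφ₂, g, hgmeas, hgIcc, WB⟩ := exists_weak_rep μ (fun n => B (φ₁ n))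
    (fun n => hBm (φ₁ n))
  set φ₀ : ℕ → ℕ := φ₁ ∘ φ₂ with hφ₀def
  have hφ₀ : StrictMono φ₀ := hφ₁.comp hφ₂
  have WA' : ∀ u : ℝ → ℝ, Measurable u → (∀ x, |u x| ≤ 2) →
      Tendsto (fun n => ∫ x, (A (φ₀ n)).indicator (fun _ => (1:ℝ)) x * u x ∂μ)
        atTop (𝓝 (∫ x, f x * u x ∂μ)) := by
    intro u hu hub
    exact (WA u hu hub).comp (hφ₂.tendsto_atTop)
  have WB' : ∀ u : ℝ → ℝ, Measurable u → (∀ x, |u x| ≤ 2) →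
      Tendsto (fun n => ∫ x, (B (φ₀ n)).indicator (fun _ => (1:ℝ)) x * u x ∂μ)
        atTop (𝓝 (∫ x, g x * u x ∂μ)) := by
    intro u hu hub
    exact WB u hu hub
  -- residues
  set r : ℕ → ℝ → ℝ := fun n x => (A (φ₀ n)).indicator (fun _ => (1:ℝ)) x - f x with hrdef
  set s : ℕ → ℝ → ℝ := fun n x => (B (φ₀ n)).indicator (fun _ => (1:ℝ)) x - g x with hsdef
  have hindb : ∀ (E : Set ℝ) (x : ℝ), E.indicator (fun _ => (1:ℝ)) x ∈ Icc (0:ℝ) 1 := by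
    intro E x
    by_cases h : x ∈ E <;> simp [Set.indicator_apply, h]
  have hrmeas : ∀ n, Measurable (r n) :=
    fun n => (measurable_const.indicator (hAm (φ₀ n))).sub hfmeas
  have hsmeas : ∀ n, Measurable (s n) :=
    fun n => (measurable_const.indicator (hBm (φ₀ n))).sub hgmeas
  have hrb : ∀ n x, |r n x| ≤ 2 := by
    intro n x
    have h1 := hindb (A (φ₀ n)) x
    have h2 := hfIcc x
    simp only [mem_Icc] at h1 h2
    rw [hrdef, abs_le]
    constructor
    · simp only; linarith [h1.1, h1.2, h2.1, h2.2]
    · simp only; linarith [h1.1, h1.2, h2.1, h2.2]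
  have hsb : ∀ n x, |s n x| ≤ 2 := by
    intro n x
    have h1 := hindb (B (φ₀ n)) x
    have h2 := hgIcc x
    simp only [mem_Icc] at h1 h2
    rw [hsdef, abs_le]
    constructor
    · simp only; linarith [h1.1, h1.2, h2.1, h2.2]
    · simp only; linarith [h1.1, h1.2, h2.1, h2.2]
  have hbddint : ∀ (w : ℝ → ℝ) (c : ℝ), Measurable w → (∀ x, |w x| ≤ c) → Integrable w μ := by
    intro w c hw hc
    exact (memLp_of_bounded (Eventually.of_forall fun x => mem_Icc.mpr (abs_le.mp (hc x)))
      hw.aestronglyMeasurable 1).integrable le_rfl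
  -- weak convergence of residues to 0 against residues
  have htestr : ∀ j, Tendsto (fun n => ∫ x, r n x * r j x ∂μ) atTop (𝓝 0) := by
    intro j
    have h1 := WA' (r j) (hrmeas j) (hrb j)
    have heq : ∀ n, ∫ x, r n x * r j x ∂μ
        = (∫ x, (A (φ₀ n)).indicator (fun _ => (1:ℝ)) x * r j x ∂μ) - ∫ x, f x * r j x ∂μ := by
      intro n
      rw [← integral_sub]
      · refine integral_congr_ae (Eventually.of_forall fun x => ?_)
        rw [hrdef]
        ring
      · refine hbddint _ 2 ((measurable_const.indicator (hAm (φ₀ n))).mul (hrmeas j))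
          (fun x => ?_)
        rw [abs_mul]
        have := (hindb (A (φ₀ n)) x)
        have hb1 : |(A (φ₀ n)).indicator (fun _ => (1:ℝ)) x| ≤ 1 := by
          simp only [mem_Icc] at this
          rw [abs_le]; constructor <;> linarith [this.1, this.2]
        calc |(A (φ₀ n)).indicator (fun _ => (1:ℝ)) x| * |r j x| ≤ 1 * 2 :=
              mul_le_mul hb1 (hrb j x) (abs_nonneg _) zero_le_one
          _ = 2 := by norm_num
      · refine hbddint _ 2 (hfmeas.mul (hrmeas j)) (fun x => ?_)
        rw [abs_mul]
        have h2 := hfIcc x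
        have hb1 : |f x| ≤ 1 := by
          simp only [mem_Icc] at h2
          rw [abs_le]; constructor <;> linarith [h2.1, h2.2]
        calc |f x| * |r j x| ≤ 1 * 2 := mul_le_mul hb1 (hrb j x) (abs_nonneg _) zero_le_one
          _ = 2 := by norm_num
    rw [show (0:ℝ) = (∫ x, f x * r j x ∂μ) - ∫ x, f x * r j x ∂μ by ring]
    exact Tendsto.congr (fun n => (heq n).symm) (h1.sub_const _)
  have htests : ∀ j, Tendsto (fun n => ∫ x, s n x * s j x ∂μ) atTop (𝓝 0) := by
    intro j
    have h1 := WB' (s j) (hsmeas j) (hsb j)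
    have heq : ∀ n, ∫ x, s n x * s j x ∂μ
        = (∫ x, (B (φ₀ n)).indicator (fun _ => (1:ℝ)) x * s j x ∂μ) - ∫ x, g x * s j x ∂μ := by
      intro n
      rw [← integral_sub]
      · refine integral_congr_ae (Eventually.of_forall fun x => ?_)
        rw [hsdef]
        ring
      · refine hbddint _ 2 ((measurable_const.indicator (hBm (φ₀ n))).mul (hsmeas j))
          (fun x => ?_)
        rw [abs_mul]
        have := (hindb (B (φ₀ n)) x)
        have hb1 : |(B (φ₀ n)).indicator (fun _ => (1:ℝ)) x| ≤ 1 := by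
          simp only [mem_Icc] at this
          rw [abs_le]; constructor <;> linarith [this.1, this.2]
        calc |(B (φ₀ n)).indicator (fun _ => (1:ℝ)) x| * |s j x| ≤ 1 * 2 :=
              mul_le_mul hb1 (hsb j x) (abs_nonneg _) zero_le_one
          _ = 2 := by norm_num
      · refine hbddint _ 2 (hgmeas.mul (hsmeas j)) (fun x => ?_)
        rw [abs_mul]
        have h2 := hgIcc x
        have hb1 : |g x| ≤ 1 := by
          simp only [mem_Icc] at h2
          rw [abs_le]; constructor <;> linarith [h2.1, h2.2]
        calc |g x| * |s j x| ≤ 1 * 2 := mul_le_mul hb1 (hsb j x) (abs_nonneg _) zero_le_one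
          _ = 2 := by norm_num
    rw [show (0:ℝ) = (∫ x, g x * s j x ∂μ) - ∫ x, g x * s j x ∂μ by ring]
    exact Tendsto.congr (fun n => (heq n).symm) (h1.sub_const _)
  -- recursive extraction
  have hstep : ∀ (p K : ℕ), ∃ n, p < n ∧ ∀ m ≤ p,
      |∫ x, r n x * r m x ∂μ| ≤ (1/2:ℝ)^K ∧ |∫ x, s n x * s m x ∂μ| ≤ (1/2:ℝ)^K := by
    intro p K
    have hpos : (0:ℝ) < (1/2:ℝ)^K := by positivity
    have hev : ∀ᶠ n in atTop, ∀ m ∈ Finset.range (p+1),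
        |∫ x, r n x * r m x ∂μ| ≤ (1/2:ℝ)^K ∧ |∫ x, s n x * s m x ∂μ| ≤ (1/2:ℝ)^K := by
      rw [eventually_all_finset]
      intro m _
      have h1 : ∀ᶠ n in atTop, |∫ x, r n x * r m x ∂μ| ≤ (1/2:ℝ)^K := by
        have := (htestr m).abs
        simp only [abs_zero] at this
        exact this.eventually_le_const hpos
      have h2 : ∀ᶠ n in atTop, |∫ x, s n x * s m x ∂μ| ≤ (1/2:ℝ)^K := by
        have := (htests m).abs
        simp only [abs_zero] at this
        exact this.eventually_le_const hpos
      exact h1.and h2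
    obtain ⟨n, hn1, hn2⟩ := ((eventually_gt_atTop p).and hev).exists
    exact ⟨n, hn1, fun m hm => hn2 m (Finset.mem_range.mpr (Nat.lt_succ_of_le hm))⟩
  set ψ : ℕ → ℕ := fun k => Nat.rec 0 (fun k pk => Classical.choose (hstep pk (k+1))) k
    with hψdef
  have hψsucc : ∀ k, ψ (k+1) = Classical.choose (hstep (ψ k) (k+1)) := fun k => rfl
  have hψmono : StrictMono ψ := by
    refine strictMono_nat_of_lt_succ (fun k => ?_)
    rw [hψsucc k]
    exact (Classical.choose_spec (hstep (ψ k) (k+1))).1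
  have horthr : ∀ k j, j < k → |∫ x, r (ψ k) x * r (ψ j) x ∂μ| ≤ 1 * (1/2:ℝ)^k := by
    intro k j hjk
    obtain ⟨t, rfl⟩ : ∃ t, k = t + 1 := ⟨k - 1, by omega⟩
    have hspec := (Classical.choose_spec (hstep (ψ t) (t+1))).2
    rw [hψsucc t]
    rw [one_mul]
    exact (hspec (ψ j) (hψmono.monotone (by omega))).1
  have horths : ∀ k j, j < k → |∫ x, s (ψ k) x * s (ψ j) x ∂μ| ≤ 1 * (1/2:ℝ)^k := by
    intro k j hjk
    obtain ⟨t, rfl⟩ : ∃ t, k = t + 1 := ⟨k - 1, by omega⟩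
    have hspec := (Classical.choose_spec (hstep (ψ t) (t+1))).2
    rw [hψsucc t]
    rw [one_mul]
    exact (hspec (ψ j) (hψmono.monotone (by omega))).2
  -- apply the Cesàro lemma
  have hcesr : ∀ᵐ x ∂μ, Tendsto (fun N : ℕ =>
      (∑ k ∈ Finset.range N, r (ψ k) x) / (N:ℝ)) atTop (𝓝 0) :=
    cesaro_ae μ (fun k => r (ψ k)) 2 1 (by norm_num) (by norm_num)
      (fun k => hrmeas (ψ k)) (fun k x => hrb (ψ k) x) horthr
  have hcess : ∀ᵐ y ∂μ, Tendsto (fun N : ℕ =>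
      (∑ k ∈ Finset.range N, s (ψ k) y) / (N:ℝ)) atTop (𝓝 0) :=
    cesaro_ae μ (fun k => s (ψ k)) 2 1 (by norm_num) (by norm_num)
      (fun k => hsmeas (ψ k)) (fun k y => hsb (ψ k) y) horths
  -- product part
  set ν : Measure (ℝ × ℝ) := μ.prod μ with hνdef
  set ρ : ℕ → ℝ × ℝ → ℝ := fun k p => r (ψ k) p.1 * s (ψ k) p.2 with hρdef
  have hρmeas : ∀ k, Measurable (ρ k) :=
    fun k => ((hrmeas (ψ k)).comp measurable_fst).mul ((hsmeas (ψ k)).comp measurable_snd)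
  have hρb : ∀ k p, |ρ k p| ≤ 4 := by
    intro k p
    rw [hρdef]
    simp only
    rw [abs_mul]
    calc |r (ψ k) p.1| * |s (ψ k) p.2| ≤ 2 * 2 :=
          mul_le_mul (hrb _ _) (hsb _ _) (abs_nonneg _) (by norm_num)
      _ = 4 := by norm_num
  have hss4 : ∀ k j, |∫ y, s (ψ k) y * s (ψ j) y ∂μ| ≤ 4 := by
    intro k j
    have h1 : ∫ y, s (ψ k) y * s (ψ j) y ∂μ ≤ ∫ _y, (4:ℝ) ∂μ := by
      refine integral_mono ?_ (integrable_const _) (fun y => ?_)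
      · refine hbddint _ 4 ((hsmeas _).mul (hsmeas _)) (fun y => ?_)
        rw [abs_mul]
        calc |s (ψ k) y| * |s (ψ j) y| ≤ 2 * 2 :=
              mul_le_mul (hsb _ _) (hsb _ _) (abs_nonneg _) (by norm_num)
          _ = 4 := by norm_num
      · calc s (ψ k) y * s (ψ j) y ≤ |s (ψ k) y * s (ψ j) y| := le_abs_self _
          _ ≤ 4 := by
              rw [abs_mul]
              calc |s (ψ k) y| * |s (ψ j) y| ≤ 2 * 2 :=
                    mul_le_mul (hsb _ _) (hsb _ _) (abs_nonneg _) (by norm_num)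
                _ = 4 := by norm_num
    have h2 : -(4:ℝ) ≤ ∫ y, s (ψ k) y * s (ψ j) y ∂μ := by
      have : ∫ _y, (-4:ℝ) ∂μ ≤ ∫ y, s (ψ k) y * s (ψ j) y ∂μ := by
        refine integral_mono (integrable_const _) ?_ (fun y => ?_)
        · refine hbddint _ 4 ((hsmeas _).mul (hsmeas _)) (fun y => ?_)
          rw [abs_mul]
          calc |s (ψ k) y| * |s (ψ j) y| ≤ 2 * 2 :=
                mul_le_mul (hsb _ _) (hsb _ _) (abs_nonneg _) (by norm_num)
            _ = 4 := by norm_num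
        · calc (-4:ℝ) ≤ -|s (ψ k) y * s (ψ j) y| := by
                rw [neg_le_neg_iff]
                rw [abs_mul]
                calc |s (ψ k) y| * |s (ψ j) y| ≤ 2 * 2 :=
                      mul_le_mul (hsb _ _) (hsb _ _) (abs_nonneg _) (by norm_num)
                  _ = 4 := by norm_num
            _ ≤ s (ψ k) y * s (ψ j) y := neg_abs_le _
      refine le_trans (le_of_eq ?_) this
      rw [integral_const]
      simp
    rw [abs_le]
    refine ⟨h2, h1.trans (le_of_eq ?_)⟩
    rw [integral_const]
    simp
  have hρorth : ∀ k j, j < k → |∫ p, ρ k p * ρ j p ∂ν| ≤ 4 * (1/2:ℝ)^k := by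
    intro k j hjk
    have hfact : ∫ p, ρ k p * ρ j p ∂ν
        = (∫ x, r (ψ k) x * r (ψ j) x ∂μ) * (∫ y, s (ψ k) y * s (ψ j) y ∂μ) := by
      have := integral_prod_mul (μ := μ) (ν := μ)
        (f := fun x => r (ψ k) x * r (ψ j) x) (g := fun y => s (ψ k) y * s (ψ j) y)
      rw [← this]
      refine integral_congr_ae (Eventually.of_forall fun p => ?_)
      rw [hρdef]
      simp only
      ring
    rw [hfact, abs_mul]
    calc |∫ x, r (ψ k) x * r (ψ j) x ∂μ| * |∫ y, s (ψ k) y * s (ψ j) y ∂μ|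
        ≤ (1 * (1/2:ℝ)^k) * 4 :=
          mul_le_mul (horthr k j hjk) (hss4 k j) (abs_nonneg _) (by positivity)
      _ = 4 * (1/2:ℝ)^k := by ring
  have hcesp : ∀ᵐ p ∂ν, Tendsto (fun N : ℕ =>
      (∑ k ∈ Finset.range N, ρ k p) / (N:ℝ)) atTop (𝓝 0) :=
    cesaro_ae ν ρ 4 4 (by norm_num) (by norm_num) hρmeas hρb hρorth
  -- conclusion
  refine ⟨φ₀ ∘ ψ, hφ₀.comp hψmono, f, g, (fun p => f p.1 * g p.2), ?_, ?_, ?_, ?_⟩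
  · filter_upwards [hcesr] with x hx
    have hEq : ∀ᶠ n : ℕ in atTop,
        (∑ k ∈ Finset.range n, (A ((φ₀ ∘ ψ) k)).indicator (fun _ => (1:ℝ)) x) / (n:ℝ)
        = f x + (∑ k ∈ Finset.range n, r (ψ k) x) / (n:ℝ) := by
      filter_upwards [eventually_ge_atTop 1] with n hn
      have hn0 : (n:ℝ) ≠ 0 := by positivity
      have hsum : (∑ k ∈ Finset.range n, (A ((φ₀ ∘ ψ) k)).indicator (fun _ => (1:ℝ)) x)
          = (n:ℝ) * f x + ∑ k ∈ Finset.range n, r (ψ k) x := by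
        have h1 : ∀ k, (A ((φ₀ ∘ ψ) k)).indicator (fun _ => (1:ℝ)) x = f x + r (ψ k) x := by
          intro k
          rw [hrdef]
          simp only [Function.comp_apply]
          ring
        rw [Finset.sum_congr rfl (fun k _ => h1 k), Finset.sum_add_distrib,
          Finset.sum_const, Finset.card_range, nsmul_eq_mul]
      rw [hsum, add_div, mul_div_cancel_left₀ _ hn0]
    refine Tendsto.congr' (hEq.mono fun n hn => hn.symm) ?_
    have := (tendsto_const_nhds (x := f x) (f := atTop (α := ℕ))).add hx
    simpa using this
  · filter_upwards [hcess] with y hy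
    have hEq : ∀ᶠ n : ℕ in atTop,
        (∑ k ∈ Finset.range n, (B ((φ₀ ∘ ψ) k)).indicator (fun _ => (1:ℝ)) y) / (n:ℝ)
        = g y + (∑ k ∈ Finset.range n, s (ψ k) y) / (n:ℝ) := by
      filter_upwards [eventually_ge_atTop 1] with n hn
      have hn0 : (n:ℝ) ≠ 0 := by positivity
      have hsum : (∑ k ∈ Finset.range n, (B ((φ₀ ∘ ψ) k)).indicator (fun _ => (1:ℝ)) y)
          = (n:ℝ) * g y + ∑ k ∈ Finset.range n, s (ψ k) y := by
        have h1 : ∀ k, (B ((φ₀ ∘ ψ) k)).indicator (fun _ => (1:ℝ)) y = g y + s (ψ k) y := by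
          intro k
          rw [hsdef]
          simp only [Function.comp_apply]
          ring
        rw [Finset.sum_congr rfl (fun k _ => h1 k), Finset.sum_add_distrib,
          Finset.sum_const, Finset.card_range, nsmul_eq_mul]
      rw [hsum, add_div, mul_div_cancel_left₀ _ hn0]
    refine Tendsto.congr' (hEq.mono fun n hn => hn.symm) ?_
    have := (tendsto_const_nhds (x := g y) (f := atTop (α := ℕ))).add hy
    simpa using this
  · have hfst : ∀ᵐ p ∂ν, Tendsto (fun N : ℕ =>
        (∑ k ∈ Finset.range N, r (ψ k) p.1) / (N:ℝ)) atTop (𝓝 0) :=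
      (Measure.quasiMeasurePreserving_fst (μ := μ) (ν := μ)).ae hcesr
    have hsnd : ∀ᵐ p ∂ν, Tendsto (fun N : ℕ =>
        (∑ k ∈ Finset.range N, s (ψ k) p.2) / (N:ℝ)) atTop (𝓝 0) :=
      (Measure.quasiMeasurePreserving_snd (μ := μ) (ν := μ)).ae hcess
    filter_upwards [hfst, hsnd, hcesp] with p h1 h2 h3
    have hidd : ∀ k, ((A ((φ₀ ∘ ψ) k)) ×ˢ (B ((φ₀ ∘ ψ) k))).indicator (fun _ => (1:ℝ)) p
        = (A (φ₀ (ψ k))).indicator (fun _ => (1:ℝ)) p.1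
          * (B (φ₀ (ψ k))).indicator (fun _ => (1:ℝ)) p.2 := by
      intro k
      by_cases ha : p.1 ∈ A (φ₀ (ψ k)) <;> by_cases hb : p.2 ∈ B (φ₀ (ψ k)) <;>
        simp [Set.indicator_apply, Set.mem_prod, ha, hb, Function.comp_apply]
    have hEq : ∀ᶠ n : ℕ in atTop,
        (∑ k ∈ Finset.range n,
            ((A ((φ₀ ∘ ψ) k)) ×ˢ (B ((φ₀ ∘ ψ) k))).indicator (fun _ => (1:ℝ)) p) / (n:ℝ)
        = f p.1 * g p.2 + (f p.1 * ((∑ k ∈ Finset.range n, s (ψ k) p.2) / (n:ℝ))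
            + (g p.2 * ((∑ k ∈ Finset.range n, r (ψ k) p.1) / (n:ℝ))
              + (∑ k ∈ Finset.range n, ρ k p) / (n:ℝ))) := by
      filter_upwards [eventually_ge_atTop 1] with n hn
      have hn0 : (n:ℝ) ≠ 0 := by positivity
      have h1k : ∀ k, ((A ((φ₀ ∘ ψ) k)) ×ˢ (B ((φ₀ ∘ ψ) k))).indicator (fun _ => (1:ℝ)) p
          = f p.1 * g p.2 + (f p.1 * s (ψ k) p.2 + (g p.2 * r (ψ k) p.1 + ρ k p)) := by
        intro k
        rw [hidd k]
        have hA : (A (φ₀ (ψ k))).indicator (fun _ => (1:ℝ)) p.1 = f p.1 + r (ψ k) p.1 := by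
          rw [hrdef]; ring
        have hB : (B (φ₀ (ψ k))).indicator (fun _ => (1:ℝ)) p.2 = g p.2 + s (ψ k) p.2 := by
          rw [hsdef]; ring
        rw [hA, hB, hρdef]
        simp only
        ring
      have hsum : (∑ k ∈ Finset.range n,
            ((A ((φ₀ ∘ ψ) k)) ×ˢ (B ((φ₀ ∘ ψ) k))).indicator (fun _ => (1:ℝ)) p)
          = (n:ℝ) * (f p.1 * g p.2) + (f p.1 * (∑ k ∈ Finset.range n, s (ψ k) p.2)
              + (g p.2 * (∑ k ∈ Finset.range n, r (ψ k) p.1)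
                + ∑ k ∈ Finset.range n, ρ k p)) := by
        rw [Finset.sum_congr rfl (fun k _ => h1k k)]
        rw [Finset.sum_add_distrib, Finset.sum_add_distrib, Finset.sum_add_distrib,
          Finset.sum_const, Finset.card_range, nsmul_eq_mul, ← Finset.mul_sum,
          ← Finset.mul_sum]
      rw [hsum]
      field_simp
    refine Tendsto.congr' (hEq.mono fun n hn => hn.symm) ?_
    have hT : Tendsto (fun n : ℕ => f p.1 * g p.2
        + (f p.1 * ((∑ k ∈ Finset.range n, s (ψ k) p.2) / (n:ℝ))
          + (g p.2 * ((∑ k ∈ Finset.range n, r (ψ k) p.1) / (n:ℝ))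
            + (∑ k ∈ Finset.range n, ρ k p) / (n:ℝ)))) atTop
        (𝓝 (f p.1 * g p.2 + (f p.1 * 0 + (g p.2 * 0 + 0)))) :=
      tendsto_const_nhds.add ((h2.const_mul (f p.1)).add
        ((h1.const_mul (g p.2)).add h3))
    simpa using hT
  · exact Eventually.of_forall fun p => rfl
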